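/- Let A be a nontrivial group, D a group, C an infinite subgroup of D, and form the restricted wreath products Σ₀ = A ≀ C ≤ Γ₀ = A ≀ D (with base group A^(D) = ⊕_{d∈D} A and Σ₀ = A^(C) ⋊ C). Suppose g ∈ Γ₀ is such that C ∩ g̅Cg̅⁻¹ is finite, where g̅ ∈ D is the image of g under the quotient map Γ₀ → D and g̅ ∉ C. Then the index [Σ₀ : Σ₀ ∩ gΣ₀g⁻¹] is infinite. -/

import Mathlib

/-- The conjugate subgroup `g S g⁻¹`. -/
def conjSub {G : Type*} [Group G] (g : G) (S : Subgroup G) : Subgroup G :=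
  S.map (MulAut.conj g).toMonoidHom

/-- The shift automorphism of the full function group `D → A` given by `d`. -/
def shiftEquiv {A D : Type*} [Group A] [Group D] (d : D) : (D → A) ≃* (D → A) where
  toFun f := fun x => f (d⁻¹ * x)
  invFun f := fun x => f (d * x)
  left_inv f := by funext x; simp [← mul_assoc]
  right_inv f := by funext x; simp [← mul_assoc]
  map_mul' f g := rfl

/-- The shift action of `D` on `D → A` by translation of coordinates. -/
def shift (A D : Type*) [Group A] [Group D] : D →* MulAut (D → A) where
  toFun := shiftEquiv
  map_one' := by
    ext f x
    simp [shiftEquiv]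
  map_mul' d e := by
    ext f x
    simp [shiftEquiv, mul_assoc]

theorem mulSupport_shift {A D : Type*} [Group A] [Group D] (d : D) (f : D → A) :
    Function.mulSupport ((shift A D d) f) =
      (fun x => d⁻¹ * x) ⁻¹' Function.mulSupport f := by
  ext x
  simp [shift, shiftEquiv, Function.mem_mulSupport]

/-- The restricted wreath product `A ≀ D`, as the subgroup of the unrestricted wreath
product `(D → A) ⋊ D` consisting of elements with finitely supported base component. -/
def wrSupp (A D : Type*) [Group A] [Group D] :
    Subgroup ((D → A) ⋊[shift A D] D) where
  carrier := {w | (Function.mulSupport w.left).Finite}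
  one_mem' := by
    simp [Function.mulSupport_one]
  mul_mem' := by
    intro a b ha hb
    rw [Set.mem_setOf_eq, SemidirectProduct.mul_left]
    have h2 : (Function.mulSupport (((shift A D) a.right) b.left)).Finite := by
      rw [mulSupport_shift]
      exact hb.preimage (Set.injOn_of_injective (mul_right_injective _))
    exact (ha.union h2).subset (Function.mulSupport_mul _ _)
  inv_mem' := by
    intro a ha
    rw [Set.mem_setOf_eq, SemidirectProduct.inv_left, mulSupport_shift]
    have : Function.mulSupport (a.left⁻¹) = Function.mulSupport a.left :=
      Function.mulSupport_inv a.left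
    rw [this]
    exact ha.preimage (Set.injOn_of_injective (mul_right_injective _))

/-- The subgroup `A ≀ C = A^(C) ⋊ C` of the wreath product, for a subgroup `C ≤ D`. -/
def wrC (A : Type*) {D : Type*} [Group A] [Group D] (C : Subgroup D) :
    Subgroup ((D → A) ⋊[shift A D] D) where
  carrier := {w | (Function.mulSupport w.left).Finite ∧
    Function.mulSupport w.left ⊆ (C : Set D) ∧ w.right ∈ C}
  one_mem' := by simp [Function.mulSupport_one, C.one_mem]
  mul_mem' := by
    rintro a b ⟨haf, haC, har⟩ ⟨hbf, hbC, hbr⟩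
    have hsf : (Function.mulSupport (((shift A D) a.right) b.left)).Finite := by
      rw [mulSupport_shift]
      exact hbf.preimage (Set.injOn_of_injective (mul_right_injective _))
    have hsC : Function.mulSupport (((shift A D) a.right) b.left) ⊆ (C : Set D) := by
      rw [mulSupport_shift]
      intro x hx
      have h1 : a.right⁻¹ * x ∈ C := hbC hx
      have h2 := C.mul_mem har h1
      simpa [← mul_assoc] using h2
    refine ⟨?_, ?_, ?_⟩
    · rw [SemidirectProduct.mul_left]
      exact (haf.union hsf).subset (Function.mulSupport_mul _ _)
    · rw [SemidirectProduct.mul_left]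
      exact (Function.mulSupport_mul _ _).trans (Set.union_subset haC hsC)
    · rw [SemidirectProduct.mul_right]
      exact C.mul_mem har hbr
  inv_mem' := by
    rintro a ⟨haf, haC, har⟩
    have hs : Function.mulSupport (((shift A D) a.right⁻¹) a.left⁻¹) =
        (fun x => a.right⁻¹⁻¹ * x) ⁻¹' Function.mulSupport a.left := by
      rw [mulSupport_shift]
      ext y
      simp [Function.mem_mulSupport]
    refine ⟨?_, ?_, ?_⟩
    · rw [SemidirectProduct.inv_left, hs]
      exact haf.preimage (Set.injOn_of_injective (mul_right_injective _))
    · rw [SemidirectProduct.inv_left, hs]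
      intro x hx
      have h1 : a.right⁻¹⁻¹ * x ∈ C := haC hx
      have h2 := C.mul_mem (C.inv_mem har) h1
      simpa [← mul_assoc] using h2
    · rw [SemidirectProduct.inv_right]
      exact C.inv_mem har

lemma mem_conjSub {G : Type*} [Group G] (g w : G) (S : Subgroup G) :
    w ∈ conjSub g S ↔ g⁻¹ * w * g ∈ S := by
  simp only [conjSub, Subgroup.mem_map, MulEquiv.coe_toMonoidHom, MulAut.conj_apply]
  constructor
  · rintro ⟨s, hs, rfl⟩
    have : g⁻¹ * (g * s * g⁻¹) * g = s := by group
    rwa [this]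
  · intro h
    exact ⟨g⁻¹ * w * g, h, by group⟩

lemma conj_base_eval {A D : Type*} [Group A] [Group D]
    (g : (D → A) ⋊[shift A D] D) (f : D → A) (y : D) :
    (g⁻¹ * (⟨f, 1⟩ : (D → A) ⋊[shift A D] D) * g).left (g.right⁻¹ * y)
      = (g.left y)⁻¹ * f y * (g.left y) := by
  rw [SemidirectProduct.mul_left, SemidirectProduct.mul_left, SemidirectProduct.inv_left,
    SemidirectProduct.mul_right, SemidirectProduct.inv_right]
  simp [SemidirectProduct.mul_left, SemidirectProduct.inv_left, shift, shiftEquiv,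
    mul_inv_cancel_left, -SemidirectProduct.mk_eq_inl_mul_inr]

lemma prod_single_eq {A D : Type*} [Group A] [Group D] [DecidableEq D] (a : A) (c c' : D) :
    ((⟨Pi.mulSingle c' a, 1⟩ : (D → A) ⋊[shift A D] D)⁻¹ *
      ⟨Pi.mulSingle c a, 1⟩ : (D → A) ⋊[shift A D] D)
      = ⟨(Pi.mulSingle c' a)⁻¹ * Pi.mulSingle c a, 1⟩ := by
  ext <;>
    simp [SemidirectProduct.mul_left, SemidirectProduct.inv_left,
      SemidirectProduct.mul_right, SemidirectProduct.inv_right]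

/-- If `A` is nontrivial, `C ≤ D` is infinite, `g` lies in the restricted wreath product
`Γ₀ = A ≀ D` with `ḡ = g.right ∉ C` and `C ∩ ḡCḡ⁻¹` finite, then
`[Σ₀ : Σ₀ ∩ gΣ₀g⁻¹] = ∞` for `Σ₀ = A ≀ C`. -/
theorem stmt12 {A D : Type*} [Group A] [Group D] (hA : ∃ a : A, a ≠ 1)
    (C : Subgroup D) (hCinf : (C : Set D).Infinite)
    (g : (D → A) ⋊[shift A D] D) (hg : g ∈ wrSupp A D)
    (hgC : g.right ∉ C)
    (hfin : ((C ⊓ conjSub g.right C : Subgroup D) : Set D).Finite) :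
    (conjSub g (wrC A C)).relIndex (wrC A C) = 0 := by
  classical
  obtain ⟨a, ha⟩ := hA
  -- the base elements δ_c^a
  have hxmem : ∀ c : D, c ∈ C →
      (⟨Pi.mulSingle c a, 1⟩ : (D → A) ⋊[shift A D] D) ∈ wrC A C := by
    intro c hc
    have hsub : Function.mulSupport (Pi.mulSingle c a : D → A) ⊆ {c} := by
      intro y hy
      rw [Set.mem_singleton_iff]
      by_contra hyc
      exact hy (Pi.mulSingle_eq_of_ne (M := fun _ => A) hyc a)
    exact ⟨(Set.finite_singleton c).subset hsub,
      hsub.trans (by simpa using hc), C.one_mem⟩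
  -- distinct c's give distinct cosets
  have key : ∀ c c' : D, c ∈ C → c' ∈ C → c ≠ c' →
      ((⟨Pi.mulSingle c' a, 1⟩ : (D → A) ⋊[shift A D] D)⁻¹ *
        ⟨Pi.mulSingle c a, 1⟩) ∉ conjSub g (wrC A C) := by
    intro c c' hc hc' hne hmem
    rw [mem_conjSub, prod_single_eq] at hmem
    obtain ⟨-, hsupp, -⟩ := hmem
    have hval : (g⁻¹ * (⟨(Pi.mulSingle c' a)⁻¹ * Pi.mulSingle c a, 1⟩ :
        (D → A) ⋊[shift A D] D) * g).left (g.right⁻¹ * c) ≠ 1 := by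
      rw [conj_base_eval]
      have h1 : ((Pi.mulSingle c' a : D → A)⁻¹ * (Pi.mulSingle c a : D → A)) c = a := by
        simp [Pi.mulSingle_eq_of_ne hne, Pi.mulSingle_eq_same]
      rw [h1]
      intro h
      apply ha
      calc a = g.left c * ((g.left c)⁻¹ * a * g.left c) * (g.left c)⁻¹ := by group
        _ = g.left c * 1 * (g.left c)⁻¹ := by rw [h]
        _ = 1 := by group
    have hmemC : g.right⁻¹ * c ∈ C := hsupp hval
    exact hgC (by simpa using C.inv_mem (C.mul_mem hmemC (C.inv_mem hc)))
  -- build an injection from C into the quotient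
  haveI : Infinite C := Set.infinite_coe_iff.mpr hCinf
  have hinj : Function.Injective (fun c : C =>
      (QuotientGroup.mk ⟨⟨Pi.mulSingle (c : D) a, 1⟩, hxmem c c.2⟩ :
        (wrC A C) ⧸ (conjSub g (wrC A C)).subgroupOf (wrC A C))) := by
    intro c c' hcc'
    by_contra hne
    have hne' : (c : D) ≠ (c' : D) := fun h => hne (Subtype.ext h)
    rw [QuotientGroup.eq, Subgroup.mem_subgroupOf] at hcc'
    exact key c' c c'.2 c.2 hne'.symm hcc'
  haveI : Infinite ((wrC A C) ⧸ (conjSub g (wrC A C)).subgroupOf (wrC A C)) :=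
    Infinite.of_injective _ hinj
  rw [Subgroup.relIndex, Subgroup.index]
  exact Nat.card_eq_zero_of_infinite
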